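/- Let à = D^{-1/2} A D^{-1/2} be the symmetrically normalized adjacency matrix of a graph and L = I − à its normalized Laplacian. For α ∈ (0,1), the unique minimizer of the objective H ↦ (1−α)‖H − H°‖_F² + α·trace(H^T L H) over H ∈ ℝ^{n×k} is H = (1−α)(I − αÃ)^{-1} H° = Σ_{ℓ=0}^∞ (1−α)α^ℓ Ã^ℓ H°, where the Neumann series converges since the spectral radius of à is at most 1 and α < 1. -/

import Mathlib

open Matrix

/-- The normalized adjacency matrix is a contraction in the Euclidean norm. -/
lemma atil_contract {n : ℕ} (A : Matrix (Fin n) (Fin n) ℝ) (hsymm : A.IsSymm)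
    (h01 : ∀ i j, A i j = 0 ∨ A i j = 1)
    (d : Fin n → ℝ) (hd : ∀ i, d i = ∑ j, A i j) (hdpos : ∀ i, 0 < d i)
    (Atil : Matrix (Fin n) (Fin n) ℝ)
    (hAtil : ∀ i j, Atil i j = A i j / (Real.sqrt (d i) * Real.sqrt (d j)))
    (x : Fin n → ℝ) :
    ∑ i, (Atil.mulVec x i) ^ 2 ≤ ∑ i, (x i) ^ 2 := by
  have hA2 : ∀ i j, A i j * A i j = A i j := fun i j => by
    rcases h01 i j with h | h <;> simp [h]
  have hs : ∀ i, Real.sqrt (d i) ≠ 0 := fun i =>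
    (Real.sqrt_pos.mpr (hdpos i)).ne'
  have hsq : ∀ i, Real.sqrt (d i) ^ 2 = d i := fun i => Real.sq_sqrt (hdpos i).le
  have h1 : ∀ i, (Atil.mulVec x i) ^ 2 ≤ ∑ j, A i j * ((x j) ^ 2 / d j) := by
    intro i
    have hrw : Atil.mulVec x i
        = (Real.sqrt (d i))⁻¹ * ∑ j, A i j * (A i j * (x j / Real.sqrt (d j))) := by
      rw [Finset.mul_sum]
      simp only [Matrix.mulVec, dotProduct, hAtil]
      refine Finset.sum_congr rfl fun j _ => ?_
      rw [show A i j * (A i j * (x j / Real.sqrt (d j))) = A i j * (x j / Real.sqrt (d j)) by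
        rw [← mul_assoc, hA2]]
      field_simp
    have hCS := Finset.sum_mul_sq_le_sq_mul_sq Finset.univ (fun j => A i j)
      (fun j => A i j * (x j / Real.sqrt (d j)))
    have e1 : ∑ j, (A i j) ^ 2 = d i := by
      rw [hd i]; exact Finset.sum_congr rfl fun j _ => by rw [sq, hA2]
    have e2 : ∑ j, (A i j * (x j / Real.sqrt (d j))) ^ 2
        = ∑ j, A i j * ((x j) ^ 2 / d j) := by
      refine Finset.sum_congr rfl fun j _ => ?_
      rw [mul_pow, div_pow, hsq, sq, hA2]
    rw [hrw, mul_pow, inv_pow, hsq]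
    calc (d i)⁻¹ * (∑ j, A i j * (A i j * (x j / Real.sqrt (d j)))) ^ 2
        ≤ (d i)⁻¹ * ((∑ j, (A i j) ^ 2) * ∑ j, (A i j * (x j / Real.sqrt (d j))) ^ 2) := by
          exact mul_le_mul_of_nonneg_left hCS (inv_nonneg.mpr (hdpos i).le)
      _ = ∑ j, A i j * ((x j) ^ 2 / d j) := by
          rw [e1, e2, ← mul_assoc, inv_mul_cancel₀ (hdpos i).ne', one_mul]
  calc ∑ i, (Atil.mulVec x i) ^ 2 ≤ ∑ i, ∑ j, A i j * ((x j) ^ 2 / d j) :=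
        Finset.sum_le_sum fun i _ => h1 i
    _ = ∑ j, (∑ i, A i j) * ((x j) ^ 2 / d j) := by
        rw [Finset.sum_comm]
        exact Finset.sum_congr rfl fun j _ => (Finset.sum_mul ..).symm
    _ = ∑ j, (x j) ^ 2 := by
        refine Finset.sum_congr rfl fun j _ => ?_
        have : ∑ i, A i j = d j := by
          rw [hd j]
          exact Finset.sum_congr rfl fun i _ => hsymm.apply j i
        rw [this, mul_div_cancel₀ _ (hdpos j).ne']

section Aux

variable {n k : ℕ}

/-- The Frobenius pairing `trace (Xᵀ * Y)` as an explicit double sum. -/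
lemma trace_transpose_mul_eq_sum (X Y : Matrix (Fin n) (Fin k) ℝ) :
    Matrix.trace (Xᵀ * Y) = ∑ i, ∑ j, X i j * Y i j := by
  simp only [Matrix.trace, Matrix.diag, Matrix.mul_apply, Matrix.transpose_apply]
  exact Finset.sum_comm

lemma summable_matrix {f : ℕ → Matrix (Fin n) (Fin k) ℝ}
    (h : ∀ i j, Summable fun ℓ => f ℓ i j) : Summable f :=
  Pi.summable.mpr fun i => Pi.summable.mpr fun j => h i j

lemma matrix_tsum_apply {f : ℕ → Matrix (Fin n) (Fin k) ℝ}
    (h : Summable f) (i : Fin n) (j : Fin k) :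
    (∑' ℓ, f ℓ) i j = ∑' ℓ, f ℓ i j := by
  erw [tsum_apply h, tsum_apply (Pi.summable.mp h i)]

end Aux

theorem gnn_denoising_closed_form {n k : ℕ}
    (A : Matrix (Fin n) (Fin n) ℝ)
    (hsymm : A.IsSymm) (h01 : ∀ i j, A i j = 0 ∨ A i j = 1)
    (d : Fin n → ℝ) (hd : ∀ i, d i = ∑ j, A i j) (hdpos : ∀ i, 0 < d i)
    (Atil : Matrix (Fin n) (Fin n) ℝ)
    (hAtil : ∀ i j, Atil i j = A i j / (Real.sqrt (d i) * Real.sqrt (d j)))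
    (L : Matrix (Fin n) (Fin n) ℝ) (hL : L = 1 - Atil)
    (α : ℝ) (hα : α ∈ Set.Ioo (0 : ℝ) 1)
    (H0 : Matrix (Fin n) (Fin k) ℝ)
    (obj : Matrix (Fin n) (Fin k) ℝ → ℝ)
    (hobj : ∀ H, obj H =
      (1 - α) * (∑ i, ∑ j, (H i j - H0 i j) ^ 2) +
        α * Matrix.trace (Hᵀ * L * H))
    (Hstar : Matrix (Fin n) (Fin k) ℝ)
    (hHstar : Hstar = ∑' ℓ : ℕ, ((1 - α) * α ^ ℓ) • (Atil ^ ℓ * H0)) :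
    (∀ H, obj Hstar ≤ obj H) ∧
      (∀ H, obj H = obj Hstar → H = Hstar) ∧
      Hstar = (1 - α) • ((1 - α • Atil)⁻¹ * H0) := by
  obtain ⟨hα0, hα1⟩ := hα
  -- basic contraction facts
  have contract : ∀ x : Fin n → ℝ, ∑ i, (Atil.mulVec x i) ^ 2 ≤ ∑ i, (x i) ^ 2 :=
    atil_contract A hsymm h01 d hd hdpos Atil hAtil
  have pow_contract : ∀ (ℓ : ℕ) (x : Fin n → ℝ),
      ∑ i, ((Atil ^ ℓ).mulVec x i) ^ 2 ≤ ∑ i, (x i) ^ 2 := by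
    intro ℓ
    induction ℓ with
    | zero => intro x; simp [Matrix.one_mulVec]
    | succ m ih =>
      intro x
      have : (Atil ^ (m + 1)).mulVec x = Atil.mulVec ((Atil ^ m).mulVec x) := by
        rw [Matrix.mulVec_mulVec, ← pow_succ']
      rw [this]
      exact le_trans (contract _) (ih x)
  -- dot product with Atil is dominated by the squared norm
  have dot_le : ∀ x : Fin n → ℝ, dotProduct x (Atil.mulVec x) ≤ ∑ i, (x i) ^ 2 := by
    intro x
    have hCS := Finset.sum_mul_sq_le_sq_mul_sq Finset.univ (fun i => x i)
      (fun i => Atil.mulVec x i)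
    have h2 := contract x
    have hnn : (0 : ℝ) ≤ ∑ i, (x i) ^ 2 :=
      Finset.sum_nonneg fun i _ => sq_nonneg _
    have hdp : dotProduct x (Atil.mulVec x) = ∑ i, x i * Atil.mulVec x i := rfl
    rw [hdp]
    nlinarith [Finset.sum_nonneg (fun i (_ : i ∈ Finset.univ) => sq_nonneg (Atil.mulVec x i))]
  -- L is positive semidefinite
  have Lpsd : ∀ x : Fin n → ℝ, 0 ≤ dotProduct x (L.mulVec x) := by
    intro x
    have : dotProduct x (L.mulVec x)
        = ∑ i, (x i) ^ 2 - dotProduct x (Atil.mulVec x) := by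
      rw [hL, Matrix.sub_mulVec, Matrix.one_mulVec, dotProduct_sub]
      congr 1
      simp [dotProduct, sq]
    rw [this]
    linarith [dot_le x]
  -- entrywise bound on (Atil ^ ℓ * H0)
  set C : ℝ := ∑ i, ∑ j, (H0 i j) ^ 2 with hC
  have hCnn : 0 ≤ C := Finset.sum_nonneg fun i _ => Finset.sum_nonneg fun j _ => sq_nonneg _
  have entry_bound : ∀ (ℓ : ℕ) (i : Fin n) (j : Fin k),
      |(Atil ^ ℓ * H0) i j| ≤ Real.sqrt C := by
    intro ℓ i j
    have he : (Atil ^ ℓ * H0) i j = (Atil ^ ℓ).mulVec (fun r => H0 r j) i := rfl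
    have h1 : ((Atil ^ ℓ * H0) i j) ^ 2 ≤ C := by
      rw [he]
      calc ((Atil ^ ℓ).mulVec (fun r => H0 r j) i) ^ 2
          ≤ ∑ i', ((Atil ^ ℓ).mulVec (fun r => H0 r j) i') ^ 2 :=
            Finset.single_le_sum
              (f := fun i' => ((Atil ^ ℓ).mulVec (fun r => H0 r j) i') ^ 2)
              (fun i' _ => sq_nonneg _) (Finset.mem_univ i)
        _ ≤ ∑ i', (H0 i' j) ^ 2 := pow_contract ℓ _
        _ ≤ C := by
            rw [hC]
            exact Finset.single_le_sum
              (f := fun j' => ∑ i', (H0 i' j') ^ 2)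
              (fun j' _ => Finset.sum_nonneg fun i' _ => sq_nonneg _) (Finset.mem_univ j)
              |>.trans_eq Finset.sum_comm
    exact Real.abs_le_sqrt h1
  -- the geometric matrix series
  set P : ℕ → Matrix (Fin n) (Fin k) ℝ := fun ℓ => Atil ^ ℓ * H0 with hP
  set G : ℕ → Matrix (Fin n) (Fin k) ℝ := fun ℓ => α ^ ℓ • P ℓ with hG
  have hGsum : Summable G := by
    refine summable_matrix fun i j => ?_
    refine Summable.of_norm_bounded
      ((summable_geometric_of_lt_one hα0.le hα1).mul_right (Real.sqrt C)) fun ℓ => ?_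
    have : G ℓ i j = α ^ ℓ * P ℓ i j := rfl
    rw [Real.norm_eq_abs, this, abs_mul, abs_pow, abs_of_pos hα0]
    exact mul_le_mul_of_nonneg_left (entry_bound ℓ i j) (pow_nonneg hα0.le ℓ)
  have hHstar' : Hstar = (1 - α) • ∑' ℓ, G ℓ := by
    rw [hHstar, ← Summable.tsum_const_smul (1 - α) hGsum]
    congr 1
    funext ℓ
    show ((1 - α) * α ^ ℓ) • (Atil ^ ℓ * H0) = (1 - α) • (α ^ ℓ • (Atil ^ ℓ * H0))
    rw [smul_smul]
  set M : Matrix (Fin n) (Fin n) ℝ := 1 - α • Atil with hM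
  -- the left-multiplication continuous linear map
  let φ : Matrix (Fin n) (Fin k) ℝ →L[ℝ] Matrix (Fin n) (Fin k) ℝ :=
    { toFun := fun X => M * X
      map_add' := fun X Y => Matrix.mul_add M X Y
      map_smul' := fun c X => (Matrix.mul_smul M c X)
      cont := Continuous.matrix_mul continuous_const continuous_id }
  have hφ : ∀ X, φ X = M * X := fun X => rfl
  have hMG : ∀ ℓ, M * G ℓ = G ℓ - G (ℓ + 1) := by
    intro ℓ
    have h1 : Atil * P ℓ = P (ℓ + 1) := by
      rw [hP, ← Matrix.mul_assoc, ← pow_succ']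
    rw [hM, Matrix.sub_mul, Matrix.one_mul, Matrix.smul_mul, Matrix.mul_smul, h1,
      smul_smul, ← pow_succ']
  have hGshift : Summable (fun ℓ => G (ℓ + 1)) := (summable_nat_add_iff 1).mpr hGsum
  have hMS : M * (∑' ℓ, G ℓ) = H0 := by
    have := φ.map_tsum hGsum
    rw [hφ] at this
    rw [this]
    have : (∑' ℓ, φ (G ℓ)) = ∑' ℓ, (G ℓ - G (ℓ + 1)) := by
      congr 1; funext ℓ; rw [hφ, hMG]
    rw [this, Summable.tsum_sub hGsum hGshift, Summable.tsum_eq_zero_add hGsum]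
    have hG0 : G 0 = H0 := by rw [hG]; simp [hP]
    rw [hG0]
    abel
  have key : M * Hstar = (1 - α) • H0 := by
    rw [hHstar', Matrix.mul_smul, hMS]
  -- Atil and M are symmetric
  have hAtilSymm : Atilᵀ = Atil := by
    ext i j
    rw [Matrix.transpose_apply, hAtil, hAtil, hsymm.apply j i, mul_comm]
  have hMsymm : Mᵀ = M := by
    rw [hM, Matrix.transpose_sub, Matrix.transpose_one, Matrix.transpose_smul, hAtilSymm]
  have hLsymm : Lᵀ = L := by
    rw [hL, Matrix.transpose_sub, Matrix.transpose_one, hAtilSymm]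
  -- M is positive definite
  have hMpos : M.PosDef := by
    rw [Matrix.posDef_iff_dotProduct_mulVec]
    constructor
    · show Mᴴ = M
      ext i j
      rw [Matrix.conjTranspose_apply, star_trivial]
      exact congrFun (congrFun hMsymm i) j
    · intro x hx
      have hx2 : 0 < ∑ i, (x i) ^ 2 := by
        obtain ⟨i, hi⟩ := Function.ne_iff.mp hx
        have hi' : x i ≠ 0 := by simpa using hi
        have h1 : (0:ℝ) < (x i) ^ 2 := by positivity
        have h2 : (x i) ^ 2 ≤ ∑ i', (x i') ^ 2 := Finset.single_le_sum
          (f := fun i' => (x i') ^ 2) (fun i' _ => sq_nonneg _) (Finset.mem_univ i)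
        linarith
      have hstar : star x = x := by simp
      rw [hstar]
      have hdpM : dotProduct x (M.mulVec x)
          = dotProduct x x - α * dotProduct x (Atil.mulVec x) := by
        rw [hM, Matrix.sub_mulVec, Matrix.one_mulVec, dotProduct_sub, Matrix.smul_mulVec,
          dotProduct_smul, smul_eq_mul]
      have hxx : dotProduct x x = ∑ i, (x i) ^ 2 := by simp [dotProduct, sq]
      rw [hdpM, hxx]
      have := mul_le_mul_of_nonneg_left (dot_le x) hα0.le
      nlinarith
  have hMdet : IsUnit M.det := (Matrix.isUnit_iff_isUnit_det M).mp hMpos.isUnit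
  have hMinv : M⁻¹ * M = 1 := Matrix.nonsing_inv_mul M hMdet
  -- third conjunct
  have hthird : Hstar = (1 - α) • ((1 - α • Atil)⁻¹ * H0) := by
    have : Hstar = M⁻¹ * (M * Hstar) := by
      rw [← Matrix.mul_assoc, hMinv, Matrix.one_mul]
    rw [this, key, Matrix.mul_smul, hM]
  -- the stationarity condition: the "gradient" vanishes at Hstar
  have hZ : (1 - α) • (Hstar - H0) + α • (L * Hstar) = 0 := by
    have hLmul : L * Hstar = Hstar - Atil * Hstar := by
      rw [hL, Matrix.sub_mul, Matrix.one_mul]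
    have hMmul : M * Hstar = Hstar - α • (Atil * Hstar) := by
      rw [hM, Matrix.sub_mul, Matrix.one_mul, Matrix.smul_mul]
    have k2 : Hstar - α • (Atil * Hstar) = (1 - α) • H0 := by rw [← hMmul, key]
    rw [hLmul]
    have : (1 - α) • (Hstar - H0) + α • (Hstar - Atil * Hstar)
        = (Hstar - α • (Atil * Hstar)) - (1 - α) • H0 := by module
    rw [this, k2, sub_self]
  -- symmetry of the Frobenius pairing
  have tsymm : ∀ X Y : Matrix (Fin n) (Fin k) ℝ,
      Matrix.trace (Yᵀ * X) = Matrix.trace (Xᵀ * Y) := by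
    intro X Y
    rw [trace_transpose_mul_eq_sum, trace_transpose_mul_eq_sum]
    exact Finset.sum_congr rfl fun i _ => Finset.sum_congr rfl fun j _ => mul_comm _ _
  -- sum of squares as trace
  have sq_tr : ∀ X Y : Matrix (Fin n) (Fin k) ℝ,
      ∑ i, ∑ j, (X i j - Y i j) ^ 2 = Matrix.trace ((X - Y)ᵀ * (X - Y)) := by
    intro X Y
    rw [trace_transpose_mul_eq_sum]
    exact Finset.sum_congr rfl fun i _ => Finset.sum_congr rfl fun j _ => by
      rw [Matrix.sub_apply, sq]
  -- expansion of the objective around Hstar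
  have expand : ∀ H, obj H = obj Hstar +
      ((1 - α) * Matrix.trace ((H - Hstar)ᵀ * (H - Hstar)) +
        α * Matrix.trace ((H - Hstar)ᵀ * L * (H - Hstar))) := by
    intro H
    set E := H - Hstar with hE
    set W := Hstar - H0 with hW
    have hHH0 : H - H0 = E + W := by rw [hE, hW]; abel
    have hHsum : H = E + Hstar := by rw [hE]; abel
    -- expand the quadratic term
    have e1 : Matrix.trace ((H - H0)ᵀ * (H - H0))
        = Matrix.trace (Eᵀ * E) + Matrix.trace (Wᵀ * W) + 2 * Matrix.trace (Eᵀ * W) := by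
      rw [hHH0, Matrix.transpose_add, Matrix.add_mul, Matrix.mul_add, Matrix.mul_add,
        Matrix.trace_add, Matrix.trace_add, Matrix.trace_add, tsymm W E]
      ring
    have e2 : Matrix.trace (Hᵀ * L * H)
        = Matrix.trace (Eᵀ * L * E) + Matrix.trace (Hstarᵀ * L * Hstar)
          + 2 * Matrix.trace (Eᵀ * (L * Hstar)) := by
      have swap : Matrix.trace (Hstarᵀ * L * E) = Matrix.trace (Eᵀ * (L * Hstar)) := by
        rw [← Matrix.trace_transpose (Hstarᵀ * L * E), Matrix.transpose_mul, Matrix.transpose_mul,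
          Matrix.transpose_transpose, hLsymm]
      rw [hHsum, Matrix.transpose_add, Matrix.add_mul, Matrix.add_mul, Matrix.mul_add,
        Matrix.mul_add, Matrix.trace_add, Matrix.trace_add, Matrix.trace_add, swap,
        Matrix.mul_assoc Eᵀ L Hstar]
      ring
    -- the cross terms vanish
    have cross : (1 - α) * Matrix.trace (Eᵀ * W) + α * Matrix.trace (Eᵀ * (L * Hstar)) = 0 := by
      have : (1 - α) * Matrix.trace (Eᵀ * W) + α * Matrix.trace (Eᵀ * (L * Hstar))
          = Matrix.trace (Eᵀ * ((1 - α) • W + α • (L * Hstar))) := by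
        rw [Matrix.mul_add, Matrix.mul_smul, Matrix.mul_smul, Matrix.trace_add,
          Matrix.trace_smul, Matrix.trace_smul, smul_eq_mul, smul_eq_mul]
      rw [this, hZ, Matrix.mul_zero, Matrix.trace_zero]
    have o1 : obj H = (1 - α) * Matrix.trace ((H - H0)ᵀ * (H - H0))
        + α * Matrix.trace (Hᵀ * L * H) := by rw [hobj H, sq_tr]
    have o2 : obj Hstar = (1 - α) * Matrix.trace (Wᵀ * W)
        + α * Matrix.trace (Hstarᵀ * L * Hstar) := by rw [hobj Hstar, sq_tr, ← hW]
    rw [o1, o2, e1, e2]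
    linear_combination (2 : ℝ) * cross
  -- nonnegativity of the two quadratic forms
  have qnn1 : ∀ X : Matrix (Fin n) (Fin k) ℝ, 0 ≤ Matrix.trace (Xᵀ * X) := by
    intro X
    rw [trace_transpose_mul_eq_sum]
    exact Finset.sum_nonneg fun i _ => Finset.sum_nonneg fun j _ => mul_self_nonneg _
  have qnn2 : ∀ X : Matrix (Fin n) (Fin k) ℝ, 0 ≤ Matrix.trace (Xᵀ * L * X) := by
    intro X
    rw [Matrix.mul_assoc, trace_transpose_mul_eq_sum, Finset.sum_comm]
    exact Finset.sum_nonneg fun j _ => Lpsd (fun i => X i j)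
  refine ⟨?_, ?_, hthird⟩
  · intro H
    rw [expand H]
    have h1 := qnn1 (H - Hstar)
    have h2 := qnn2 (H - Hstar)
    have p1 : 0 ≤ (1 - α) * Matrix.trace ((H - Hstar)ᵀ * (H - Hstar)) :=
      mul_nonneg (by linarith) h1
    have p2 : 0 ≤ α * Matrix.trace ((H - Hstar)ᵀ * L * (H - Hstar)) :=
      mul_nonneg hα0.le h2
    linarith
  · intro H hEq
    have hq : (1 - α) * Matrix.trace ((H - Hstar)ᵀ * (H - Hstar))
        + α * Matrix.trace ((H - Hstar)ᵀ * L * (H - Hstar)) = 0 := by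
      have := expand H
      rw [hEq] at this
      linarith
    have h1 := qnn1 (H - Hstar)
    have h2 := qnn2 (H - Hstar)
    have hzero : Matrix.trace ((H - Hstar)ᵀ * (H - Hstar)) = 0 := by
      rcases eq_or_lt_of_le h1 with h | h
      · exact h.symm
      · exfalso
        have p1 : 0 < (1 - α) * Matrix.trace ((H - Hstar)ᵀ * (H - Hstar)) :=
          mul_pos (by linarith) h
        have p2 : 0 ≤ α * Matrix.trace ((H - Hstar)ᵀ * L * (H - Hstar)) :=
          mul_nonneg hα0.le h2
        linarith
    have hsum0 : ∑ i, ∑ j, ((H - Hstar) i j) * ((H - Hstar) i j) = 0 := by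
      rw [← trace_transpose_mul_eq_sum, hzero]
    have hE0 : H - Hstar = 0 := by
      ext i j
      have h3 := (Finset.sum_eq_zero_iff_of_nonneg
        (fun i (_ : i ∈ Finset.univ) =>
          Finset.sum_nonneg fun j (_ : j ∈ Finset.univ) =>
            mul_self_nonneg ((H - Hstar) i j))).mp hsum0 i (Finset.mem_univ i)
      have h4 := (Finset.sum_eq_zero_iff_of_nonneg
        (fun j (_ : j ∈ Finset.univ) => mul_self_nonneg ((H - Hstar) i j))).mp h3 j
        (Finset.mem_univ j)
      have := mul_self_eq_zero.mp h4
      simpa using this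
    have := sub_eq_zero.mp hE0
    exact this
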